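/- Logarithmic-derivative constancy (key step for Green's function): let p : I → ℂ be differentiable and nonvanishing on an interval I, ψ : I → ℂ twice differentiable with ψ'' = −p²ψ and ψ' + ipψ nonvanishing, and J : I → ℂ differentiable and nonvanishing satisfying J' = −ip J − (p'/(2p)) J I, where I(x) = −(ψ'/ψ − ip)/(ψ'/ψ + ip) (ψ nonvanishing). Then the function A(x) = J(x)(ψ'(x) + i p(x) ψ(x)) / √(p(x)) is constant on I (for any continuous branch of the square root along which p does not cross the branch cut). -/

import Mathlib

theorem stmt_17 (S : Set ℝ) (hS : Convex ℝ S)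
    (p p' s s' ψ ψ' ψ'' J J' : ℝ → ℂ)
    (hp : ∀ x ∈ S, HasDerivWithinAt p (p' x) S x) (hp0 : ∀ x ∈ S, p x ≠ 0)
    (hs : ∀ x ∈ S, HasDerivWithinAt s (s' x) S x)
    (hsq : ∀ x ∈ S, (s x) ^ 2 = p x) (hs0 : ∀ x ∈ S, s x ≠ 0)
    (hψ : ∀ x ∈ S, HasDerivWithinAt ψ (ψ' x) S x)
    (hψ' : ∀ x ∈ S, HasDerivWithinAt ψ' (ψ'' x) S x)
    (hψ0 : ∀ x ∈ S, ψ x ≠ 0)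
    (hSch : ∀ x ∈ S, ψ'' x = -(p x) ^ 2 * ψ x)
    (hden : ∀ x ∈ S, ψ' x + Complex.I * p x * ψ x ≠ 0)
    (IR : ℝ → ℂ)
    (hIR : ∀ x ∈ S, IR x = -((ψ' x - Complex.I * p x * ψ x) /
      (ψ' x + Complex.I * p x * ψ x)))
    (hJ : ∀ x ∈ S, HasDerivWithinAt J (J' x) S x)
    (hJeq : ∀ x ∈ S, J' x = -Complex.I * p x * J x
      - (p' x / (2 * p x)) * J x * IR x)
    (A : ℝ → ℂ)
    (hA : ∀ x ∈ S, A x = J x * (ψ' x + Complex.I * p x * ψ x) / s x) :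
    ∀ x ∈ S, ∀ y ∈ S, A x = A y := by
  intro x hx y hy
  rcases eq_or_ne x y with rfl | hxy
  · rfl
  -- S has nonempty interior
  have hint : (interior S).Nonempty := by
    rcases lt_or_gt_of_ne hxy with h | h
    · have hIcc : Set.Icc x y ⊆ S := hS.ordConnected.out hx hy
      have : Set.Ioo x y ⊆ interior S := by
        rw [← interior_Icc]; exact interior_mono hIcc
      exact (Set.nonempty_Ioo.2 h).mono this
    · have hIcc : Set.Icc y x ⊆ S := hS.ordConnected.out hy hx
      have : Set.Ioo y x ⊆ interior S := by
        rw [← interior_Icc]; exact interior_mono hIcc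
      exact (Set.nonempty_Ioo.2 h).mono this
  have hU : UniqueDiffOn ℝ S := uniqueDiffOn_convex hS hint
  -- p' = 2 s s'
  have hsp : ∀ z ∈ S, p' z = 2 * s z * s' z := by
    intro z hz
    have h1 : HasDerivWithinAt p (2 * s z * s' z) S z := by
      have h3 : HasDerivWithinAt p (s' z * s z + s z * s' z) S z :=
        ((hs z hz).mul (hs z hz)).congr
          (fun w hw => by rw [← hsq w hw, pow_two, Pi.mul_apply])
          (by rw [← hsq z hz, pow_two, Pi.mul_apply])
      have he : s' z * s z + s z * s' z = 2 * s z * s' z := by ring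
      rwa [he] at h3
    have e1 := h1.derivWithin (hU z hz)
    have e2 := (hp z hz).derivWithin (hU z hz)
    rw [← e1, ← e2]
  -- A has derivative 0 within S
  have hA0 : ∀ z ∈ S, HasDerivWithinAt A ((fun _ => (0 : ℂ)) z) S z := by
    intro z hz
    have hN : HasDerivWithinAt (fun w => ψ' w + Complex.I * p w * ψ w)
        (ψ'' z + Complex.I * (p' z * ψ z + p z * ψ' z)) S z := by
      have h2 : HasDerivWithinAt (fun w => Complex.I * p w * ψ w)
          (Complex.I * (p' z * ψ z + p z * ψ' z)) S z := by
        have := ((hp z hz).mul (hψ z hz)).const_mul Complex.I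
        simpa [mul_assoc] using this
      exact (hψ' z hz).add h2
    have hB : HasDerivWithinAt (fun w => J w * (ψ' w + Complex.I * p w * ψ w) / s w)
        (((J' z * (ψ' z + Complex.I * p z * ψ z)
          + J z * (ψ'' z + Complex.I * (p' z * ψ z + p z * ψ' z))) * s z
          - J z * (ψ' z + Complex.I * p z * ψ z) * s' z) / s z ^ 2) S z :=
      ((hJ z hz).mul hN).div (hs z hz) (hs0 z hz)
    have hD0 : ((J' z * (ψ' z + Complex.I * p z * ψ z)
          + J z * (ψ'' z + Complex.I * (p' z * ψ z + p z * ψ' z))) * s z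
          - J z * (ψ' z + Complex.I * p z * ψ z) * s' z) / s z ^ 2 = 0 := by
      have hp2 : p z = s z ^ 2 := (hsq z hz).symm
      rw [hJeq z hz, hIR z hz, hSch z hz, hsp z hz, hp2]
      have hden' : ψ' z + Complex.I * s z ^ 2 * ψ z ≠ 0 := by
        rw [← hp2]; exact hden z hz
      have h2 : (2 : ℂ) * s z ^ 2 ≠ 0 := by
        simp [hs0 z hz]
      field_simp [hden', hs0 z hz, h2]
      ring_nf
      simp only [Complex.I_sq, show (Complex.I : ℂ) ^ 3 = -Complex.I from by
          rw [pow_succ, Complex.I_sq]; ring]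
      ring
    rw [hD0] at hB
    exact hB.congr (fun w hw => hA w hw) (hA z hz)
  -- conclude constancy
  have hle := hS.norm_image_sub_le_of_norm_hasDerivWithin_le hA0
    (fun z hz => norm_le_zero_iff.mpr rfl) hy hx
  have h0 : ‖A x - A y‖ ≤ 0 := by simpa using hle
  exact sub_eq_zero.mp (norm_le_zero_iff.mp h0)
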